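/- Let A ∈ ℝ^{n×q} be a matrix such that A·Aᵀ is invertible, let y, v̄ ∈ ℝ^n, let σ' > 0, let K > 0 and n > 0, and define A⁺ = Aᵀ(A·Aᵀ)⁻¹ and Δx⋆ = (1/σ')·A⁺·(y − v̄). Then Δx⋆ has the minimum Euclidean norm among all global minimizers of the CoCoA local subproblem objective: for every Δx ∈ ℝ^q with G(Δx) ≤ G(Δz) for all Δz ∈ ℝ^q, one has ‖Δx⋆‖ ≤ ‖Δx‖. -/

import Mathlib

open Matrix

/-- `Δx⋆ = (1/σ')·A⁺·(y − v̄)` has minimum Euclidean norm among all global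
minimizers of the CoCoA local subproblem objective `G`. -/
theorem cocoa_step_min_norm (n q K : ℕ) (hn : 0 < n) (hK : 0 < K)
    (A : Matrix (Fin n) (Fin q) ℝ) (hInv : IsUnit (A * Aᵀ))
    (y vbar : Fin n → ℝ) (σ' : ℝ) (hσ : 0 < σ')
    (Aplus : Matrix (Fin q) (Fin n) ℝ) (hAplus : Aplus = Aᵀ * (A * Aᵀ)⁻¹)
    (G : (Fin q → ℝ) → ℝ)
    (hG : ∀ Δx : Fin q → ℝ,
      G Δx = (1 / (2 * (K : ℝ) * (n : ℝ))) * ((vbar - y) ⬝ᵥ (vbar - y))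
        + (σ' / (2 * (n : ℝ))) * (A.mulVec Δx ⬝ᵥ A.mulVec Δx)
        + (1 / (n : ℝ)) * ((vbar - y) ⬝ᵥ A.mulVec Δx))
    (Δxstar : Fin q → ℝ) (hΔxstar : Δxstar = (1 / σ') • Aplus.mulVec (y - vbar)) :
    ∀ Δx : Fin q → ℝ, (∀ Δz : Fin q → ℝ, G Δx ≤ G Δz) →
      ‖(WithLp.equiv 2 (Fin q → ℝ)).symm Δxstar‖ ≤ ‖(WithLp.equiv 2 (Fin q → ℝ)).symm Δx‖ := by
  intro Δx hmin
  have hσ0 : σ' ≠ 0 := ne_of_gt hσ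
  set b : Fin n → ℝ := y - vbar with hb
  set c : Fin n → ℝ := (A * Aᵀ)⁻¹.mulVec b with hc
  have hstar : Δxstar = (1 / σ') • Aᵀ.mulVec c := by
    rw [hΔxstar, hAplus, hc, ← Matrix.mulVec_mulVec]
  have hABBinv : (A * Aᵀ) * (A * Aᵀ)⁻¹ = 1 :=
    Matrix.mul_nonsing_inv _ ((Matrix.isUnit_iff_isUnit_det _).mp hInv)
  have hAstar : A.mulVec Δxstar = (1 / σ') • b := by
    rw [hstar, Matrix.mulVec_smul, Matrix.mulVec_mulVec, Matrix.mulVec_mulVec,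
      hABBinv, Matrix.one_mulVec]
  have hle := hmin Δxstar
  rw [hG Δx, hG Δxstar, hAstar] at hle
  set u : Fin n → ℝ := A.mulVec Δx with hu
  have hvy : vbar - y = -b := (neg_sub y vbar).symm
  have hkey : (σ' • u - b) ⬝ᵥ (σ' • u - b) ≤ 0 := by
    have hn' : (0:ℝ) < (n:ℝ) := by exact_mod_cast hn
    have hn0 : (n:ℝ) ≠ 0 := ne_of_gt hn'
    have expand : (σ' • u - b) ⬝ᵥ (σ' • u - b)
        = σ'^2 * (u ⬝ᵥ u) - 2*σ' * (b ⬝ᵥ u) + (b ⬝ᵥ b) := by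
      simp [sub_dotProduct, dotProduct_sub, smul_dotProduct,
        dotProduct_smul, dotProduct_comm b u, smul_eq_mul]
      ring
    rw [hvy] at hle
    simp only [neg_dotProduct, dotProduct_neg, dotProduct_smul,
      smul_dotProduct, smul_eq_mul, neg_neg] at hle
    have h2 : σ' / (2*(n:ℝ)) * (u ⬝ᵥ u) - 1/(n:ℝ) * (b ⬝ᵥ u)
        ≤ σ' / (2*(n:ℝ)) * (1/σ' * (1/σ' * (b ⬝ᵥ b))) - 1/(n:ℝ) * (1/σ' * (b ⬝ᵥ b)) := by
      linarith
    rw [expand]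
    field_simp at h2
    replace h2 : σ'^2*(u ⬝ᵥ u) - 2*σ'*(b ⬝ᵥ u) + (b ⬝ᵥ b) ≤ 0 := by linarith [h2]
    have hcpos : (0:ℝ) < 2*(n:ℝ)^3*σ'^2 := by positivity
    have h4 : (2*(n:ℝ)^3*σ'^2) * (σ'^2*(u ⬝ᵥ u) - 2*σ'*(b ⬝ᵥ u) + (b ⬝ᵥ b))
        ≤ (2*(n:ℝ)^3*σ'^2) * 0 := by nlinarith [h2]
    exact le_of_mul_le_mul_left (by linarith [h4]) hcpos
  have hdnonneg : (0:ℝ) ≤ (σ' • u - b) ⬝ᵥ (σ' • u - b) := by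
    apply Finset.sum_nonneg; intro i _; exact mul_self_nonneg _
  have hdzero : σ' • u - b = 0 := by
    have heq : (σ' • u - b) ⬝ᵥ (σ' • u - b) = 0 := le_antisymm hkey hdnonneg
    funext i
    have hnn : ∀ j ∈ (Finset.univ : Finset (Fin n)),
        0 ≤ (σ' • u - b) j * (σ' • u - b) j := fun j _ => mul_self_nonneg _
    have := (Finset.sum_eq_zero_iff_of_nonneg hnn).mp heq i (Finset.mem_univ i)
    have := mul_self_eq_zero.mp this
    simpa using this
  have hAeq : A.mulVec Δx = A.mulVec Δxstar := by
    have h5 : σ' • u = b := sub_eq_zero.mp hdzero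
    rw [hAstar, ← hu, ← h5, smul_smul, one_div, inv_mul_cancel₀ hσ0, one_smul]
  have hz : A.mulVec (Δx - Δxstar) = 0 := by
    rw [Matrix.mulVec_sub, hAeq, sub_self]
  have horth : Δxstar ⬝ᵥ (Δx - Δxstar) = 0 := by
    calc Δxstar ⬝ᵥ (Δx - Δxstar)
        = (1/σ') * ((A.vecMul c) ⬝ᵥ (Δx - Δxstar)) := by
          rw [hstar, smul_dotProduct, smul_eq_mul, Matrix.mulVec_transpose]
      _ = (1/σ') * (c ⬝ᵥ A.mulVec (Δx - Δxstar)) := by rw [Matrix.dotProduct_mulVec]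
      _ = 0 := by rw [hz, dotProduct_zero, mul_zero]
  have hpyth : Δxstar ⬝ᵥ Δxstar ≤ Δx ⬝ᵥ Δx := by
    have hdiff : (0:ℝ) ≤ (Δx - Δxstar) ⬝ᵥ (Δx - Δxstar) := by
      apply Finset.sum_nonneg; intro i _; exact mul_self_nonneg _
    have expand : Δx ⬝ᵥ Δx
        = Δxstar ⬝ᵥ Δxstar + (Δx - Δxstar) ⬝ᵥ (Δx - Δxstar)
          + 2 * (Δxstar ⬝ᵥ (Δx - Δxstar)) := by
      simp [sub_dotProduct, dotProduct_sub, dotProduct_comm Δxstar Δx]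
      ring
    rw [expand, horth]
    linarith
  rw [EuclideanSpace.norm_eq, EuclideanSpace.norm_eq]
  apply Real.sqrt_le_sqrt
  have hsum : ∀ z : Fin q → ℝ, (∑ i, ‖z i‖ ^ 2) = z ⬝ᵥ z := by
    intro z
    simp [dotProduct, sq, Real.norm_eq_abs, abs_mul_abs_self]
  rw [hsum, hsum]
  exact hpyth
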